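/- For every φ ∈ ℓ^{∞∞}(ℤ) there exists ψ ∈ ℓ^∞_c(ℤ) such that every nonzero level set of φ − ψ is finite. -/
import Mathlib

open Filter

/-- A projection: a `{0,1}`-valued function. -/
def IsProj (p : ℤ → ℂ) : Prop := ∀ n, p n = 0 ∨ p n = 1

/-- Schwartz functions on `ℤ`: all moments `sup_n |n|^k |φ(n)|` are finite. -/
def IsSchwartz (φ : ℤ → ℂ) : Prop :=
  ∀ k : ℕ, ∃ C : ℝ, ∀ n : ℤ, (n.natAbs : ℝ)^k * ‖φ n‖ ≤ C

/-- Membership in `ℓ^{∞∞}(ℤ)`: `φ` is bounded and, for every ultrafilter `U` on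
`ℤ` and every `d ∈ ℕ`, `n^d (φ(n) − lim_U φ) → 0` along `U`. -/
def SmoothInf (φ : ℤ → ℂ) : Prop :=
  (∃ C, ∀ n, ‖φ n‖ ≤ C) ∧
  ∀ (U : Ultrafilter ℤ) (d : ℕ) (L : ℂ), Tendsto φ ↑U (nhds L) →
    Tendsto (fun n : ℤ => (n : ℂ)^d * (φ n - L)) ↑U (nhds 0)

/-- Any infinite set of integers has elements of arbitrarily large `natAbs`. -/
lemma exists_large_natAbs {s : Set ℤ} (hs : s.Infinite) (K : ℕ) :
    ∃ m ∈ s, K < m.natAbs := by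
  by_contra h
  push_neg at h
  exact hs ((Set.finite_Icc (-(K:ℤ)) K).subset fun m hm => by
    have := h m hm
    simp only [Set.mem_Icc]
    omega)

lemma norm_int_complex (m : ℤ) : ‖(m : ℂ)‖ = (m.natAbs : ℝ) := by
  rw [Complex.norm_intCast, Nat.cast_natAbs, Int.cast_abs]

/-- The set of values of `φ` with infinite level set is finite. -/
lemma finite_infinite_levels (φ : ℤ → ℂ) (hφ : SmoothInf φ) :
    {c : ℂ | (φ ⁻¹' {c}).Infinite}.Finite := by
  by_contra hT
  have hT' : {c : ℂ | (φ ⁻¹' {c}).Infinite}.Infinite := hT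
  obtain ⟨C, hC⟩ := hφ.1
  set e := hT'.natEmbedding with he
  set c : ℕ → ℂ := fun j => (e j : ℂ) with hc
  have hcinf : ∀ j, (φ ⁻¹' {c j}).Infinite := fun j => (e j).2
  have hcinj : Function.Injective c :=
    Subtype.val_injective.comp e.injective
  -- boundedness
  have hball : ∀ j, c j ∈ Metric.closedBall (0:ℂ) C := by
    intro j
    obtain ⟨m, hm⟩ := (hcinf j).nonempty
    have : φ m = c j := hm
    simp only [Metric.mem_closedBall, dist_zero_right]
    rw [← this]
    exact hC m
  obtain ⟨L, -, g, hg, hcg⟩ :=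
    tendsto_subseq_of_bounded (Metric.isBounded_closedBall (x := (0:ℂ)) (r := C)) hball
  -- at most one index hits L
  have hbad : {j : ℕ | c (g j) = L}.Subsingleton := by
    intro i hi j hj
    exact hg.injective (hcinj (hi.trans hj.symm))
  obtain ⟨N, hN⟩ := hbad.finite.bddAbove
  set c' : ℕ → ℂ := fun j => c (g (j + (N + 1))) with hc'
  have hc'ne : ∀ j, c' j ≠ L := by
    intro j h
    have : j + (N + 1) ≤ N := hN h
    omega
  have hc'lim : Tendsto c' atTop (nhds L) :=
    hcg.comp (tendsto_add_atTop_nat (N + 1))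
  have hc'inf : ∀ j, (φ ⁻¹' {c' j}).Infinite := fun j => hcinf _
  -- choose large points in each level set
  choose n hn hn2 using fun j =>
    exists_large_natAbs (hc'inf j) (Nat.ceil (1 / ‖c' j - L‖))
  have hφn : ∀ j, φ (n j) = c' j := fun j => hn j
  have hest : ∀ j, (1:ℝ) ≤ ((n j).natAbs : ℝ) * ‖c' j - L‖ := by
    intro j
    have hpos : 0 < ‖c' j - L‖ := by
      rw [norm_pos_iff]
      exact sub_ne_zero.mpr (hc'ne j)
    have h1 : 1 / ‖c' j - L‖ ≤ ((n j).natAbs : ℝ) := by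
      refine (Nat.le_ceil _).trans ?_
      exact_mod_cast (hn2 j).le
    have h2 := mul_le_mul_of_nonneg_right h1 hpos.le
    rwa [one_div, inv_mul_cancel₀ hpos.ne'] at h2
  -- build the ultrafilter
  set U : Ultrafilter ℤ := Ultrafilter.of (map n atTop) with hUdef
  have hU : (U : Filter ℤ) ≤ map n atTop := Ultrafilter.of_le _
  have hφU : Tendsto φ (U : Filter ℤ) (nhds L) := by
    refine Tendsto.mono_left ?_ hU
    rw [tendsto_map'_iff]
    exact hc'lim.congr fun j => (hφn j).symm
  have h0 := hφ.2 U 1 L hφU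
  have hlt : ∀ᶠ m : ℤ in (U : Filter ℤ), ‖(m:ℂ)^1 * (φ m - L)‖ < 1 := by
    have := Metric.tendsto_nhds.mp h0 1 one_pos
    simpa [dist_zero_right] using this
  have hge : ∀ᶠ m : ℤ in (U : Filter ℤ), (1:ℝ) ≤ ‖(m:ℂ)^1 * (φ m - L)‖ := by
    refine Eventually.filter_mono hU ?_
    rw [eventually_map]
    refine Eventually.of_forall fun j => ?_
    rw [pow_one, norm_mul, norm_int_complex, hφn j]
    exact hest j
  obtain ⟨m, h1, h2⟩ := (hlt.and hge).exists
  linarith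

/-- For every `φ ∈ ℓ^{∞∞}(ℤ)` there is `ψ ∈ ℓ^∞_c(ℤ)` such that every nonzero
level set of `φ − ψ` is finite. -/
theorem stmt_16 (φ : ℤ → ℂ) (hφ : SmoothInf φ) :
    ∃ ψ ∈ Submodule.span ℂ {p : ℤ → ℂ | IsProj p},
      ∀ c : ℂ, c ≠ 0 → ((fun n => φ n - ψ n) ⁻¹' {c}).Finite := by
  have hT := finite_infinite_levels φ hφ
  set S : Finset ℂ := hT.toFinset with hSdef
  set ψ : ℤ → ℂ := ∑ c ∈ S, c • Set.indicator (φ ⁻¹' {c}) (1 : ℤ → ℂ) with hψdef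
  have hmem : ψ ∈ Submodule.span ℂ {p : ℤ → ℂ | IsProj p} := by
    refine Submodule.sum_mem _ fun c _ => ?_
    refine Submodule.smul_mem _ c (Submodule.subset_span ?_)
    intro m
    by_cases h : m ∈ φ ⁻¹' {c}
    · right; simp [Set.indicator_of_mem h]
    · left; simp [Set.indicator_of_notMem h]
  have hψval : ∀ m, ψ m = if φ m ∈ S then φ m else 0 := by
    intro m
    rw [hψdef]
    rw [Finset.sum_apply]
    have : ∀ c ∈ S, (c • Set.indicator (φ ⁻¹' {c}) (1 : ℤ → ℂ)) m
        = if φ m = c then c else 0 := by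
      intro c _
      simp only [Pi.smul_apply, smul_eq_mul, Set.indicator_apply, Set.mem_preimage,
        Set.mem_singleton_iff, Pi.one_apply]
      by_cases h : φ m = c <;> simp [h]
    rw [Finset.sum_congr rfl this, Finset.sum_ite_eq S (φ m) (fun c => c)]
  refine ⟨ψ, hmem, fun c hc => ?_⟩
  by_cases hcS : (φ ⁻¹' {c}).Infinite
  · -- level set is empty
    have : (fun n => φ n - ψ n) ⁻¹' {c} = ∅ := by
      ext m
      simp only [Set.mem_preimage, Set.mem_singleton_iff, Set.mem_empty_iff_false,
        iff_false]
      intro h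
      rw [hψval m] at h
      by_cases hm : φ m ∈ S
      · rw [if_pos hm] at h
        simp at h
        exact hc h.symm
      · rw [if_neg hm] at h
        rw [sub_zero] at h
        apply hm
        rw [h, hSdef, Set.Finite.mem_toFinset]
        exact hcS
    rw [this]
    exact Set.finite_empty
  · -- level set is a subset of the finite level set of φ
    refine ((Set.not_infinite.mp hcS).subset ?_)
    intro m hm
    simp only [Set.mem_preimage, Set.mem_singleton_iff] at hm ⊢
    rw [hψval m] at hm
    by_cases h : φ m ∈ S
    · rw [if_pos h, sub_self] at hm
      exact absurd hm.symm hc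
    · rwa [if_neg h, sub_zero] at hm
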